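/- Let Z̃ ~ Binom(M, p). For 0 < l ≤ M and integer shifts Δ with 1 ≤ Δ < l, and for any k ∈ {0,...,M-Δ-1} and α ∈ [P(Z̃<k), P(Z̃≤k)], the quantity J(Δ,k,α) = P(Z̃ ≥ k+Δ) + (P(Z̃=k+Δ)/P(Z̃=k))·(P(Z̃<k) - α) is strictly decreasing in Δ, i.e., J(Δ+1,k,α) < J(Δ,k,α). -/

import Mathlib

/-- The binomial probability mass function `P(Binom(M,p) = k)`. -/
noncomputable def binomPMF (M : ℕ) (p : ℝ) (k : ℕ) : ℝ :=
  (M.choose k : ℝ) * p ^ k * (1 - p) ^ (M - k)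

lemma binomPMF_pos {M : ℕ} {p : ℝ} (hp : 0 < p) (hp1 : p < 1) {k : ℕ} (hk : k ≤ M) :
    0 < binomPMF M p k := by
  have : 0 < (M.choose k : ℝ) := by
    exact_mod_cast Nat.choose_pos hk
  exact mul_pos (mul_pos this (pow_pos hp k)) (pow_pos (by linarith) _)

theorem stmt14 (M l : ℕ) (p : ℝ) (hp : 0 < p) (hp1 : p < 1) (hl : 0 < l) (hlM : l ≤ M)
    (Δ k : ℕ) (hΔ : 1 ≤ Δ) (hΔl : Δ < l) (hk : k + Δ + 1 ≤ M)
    (α : ℝ)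
    (hα : α ∈ Set.Icc (∑ j ∈ Finset.range k, binomPMF M p j)
        (∑ j ∈ Finset.range (k + 1), binomPMF M p j)) :
    (∑ j ∈ Finset.Icc (k + Δ + 1) M, binomPMF M p j)
      + binomPMF M p (k + Δ + 1) / binomPMF M p k
        * ((∑ j ∈ Finset.range k, binomPMF M p j) - α)
    < (∑ j ∈ Finset.Icc (k + Δ) M, binomPMF M p j)
      + binomPMF M p (k + Δ) / binomPMF M p k
        * ((∑ j ∈ Finset.range k, binomPMF M p j) - α) := by
  obtain ⟨hα1, hα2⟩ := hα
  set b0 := binomPMF M p k with hb0def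
  set b1 := binomPMF M p (k + Δ) with hb1def
  set b2 := binomPMF M p (k + Δ + 1) with hb2def
  set c := (∑ j ∈ Finset.range k, binomPMF M p j) - α with hcdef
  have hb0 : 0 < b0 := binomPMF_pos hp hp1 (by omega)
  have hb1 : 0 < b1 := binomPMF_pos hp hp1 (by omega)
  have hb2 : 0 < b2 := binomPMF_pos hp hp1 (by omega)
  have hc0 : c ≤ 0 := by simp only [hcdef]; linarith
  have hc1 : -b0 ≤ c := by
    have : (∑ j ∈ Finset.range (k + 1), binomPMF M p j)
        = (∑ j ∈ Finset.range k, binomPMF M p j) + b0 := Finset.sum_range_succ _ _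
    simp only [hcdef]; linarith
  have hsplit : (∑ j ∈ Finset.Icc (k + Δ) M, binomPMF M p j)
      = b1 + ∑ j ∈ Finset.Icc (k + Δ + 1) M, binomPMF M p j := by
    rw [← Finset.sum_Ioc_add_eq_sum_Icc (by omega : k + Δ ≤ M)]
    rw [show Finset.Ioc (k + Δ) M = Finset.Icc (k + Δ + 1) M by
      ext x; simp only [Finset.mem_Ioc, Finset.mem_Icc]; omega]
    ring
  rw [hsplit]
  have key : b2 * c - b1 * c < b1 * b0 := by
    rcases le_or_gt b1 b2 with h | h
    · nlinarith [mul_pos hb1 hb0]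
    · nlinarith [mul_pos hb1 hb0]
  have hgoal : b2 / b0 * c - b1 / b0 * c < b1 := by
    rw [div_mul_eq_mul_div, div_mul_eq_mul_div, ← sub_div, div_lt_iff₀ hb0]
    linarith
  linarith
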